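/- In the q-Hamming graph, the graph distance between two subspaces A and B equals Δ(A,B) = dim A + dim B - 2·dim(A∩B). -/

import Mathlib

open Module

/-- The `n`-dimensional `q`-Hamming graph on the subspaces of `K^n`:
`A` and `B` are adjacent iff one contains the other with dimension difference 1. -/
def qHammingGraph (K : Type*) [Field K] (n : ℕ) :
    SimpleGraph (Submodule K (Fin n → K)) where
  Adj A B := (A ≤ B ∧ finrank K ↥B = finrank K ↥A + 1) ∨
    (B ≤ A ∧ finrank K ↥A = finrank K ↥B + 1)
  symm := ⟨by intro A B h; tauto⟩
  loopless := ⟨by intro A h; rcases h with ⟨-, h⟩ | ⟨-, h⟩ <;> omega⟩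

section aux

variable {K : Type*} [Field K] {n : ℕ}

lemma qH_exists_step (C A : Submodule K (Fin n → K)) (h : C < A) :
    ∃ C', C ≤ C' ∧ C' ≤ A ∧ finrank K ↥C' = finrank K ↥C + 1 := by
  obtain ⟨x, hxA, hxC⟩ := SetLike.exists_of_lt h
  have hx0 : x ≠ 0 := fun h0 => hxC (h0 ▸ C.zero_mem)
  refine ⟨C ⊔ K ∙ x, le_sup_left,
    sup_le h.le ((Submodule.span_singleton_le_iff_mem _ _).2 hxA), ?_⟩
  have key := Submodule.finrank_sup_add_finrank_inf_eq C (K ∙ x)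
  rw [finrank_span_singleton hx0] at key
  have hlt : C < C ⊔ K ∙ x := by
    refine lt_of_le_of_ne le_sup_left fun he => hxC ?_
    have : x ∈ C ⊔ K ∙ x := Submodule.mem_sup_right (Submodule.mem_span_singleton_self x)
    rwa [← he] at this
  have h2 : finrank K ↥C < finrank K ↥(C ⊔ K ∙ x) :=
    Submodule.finrank_lt_finrank_of_lt hlt
  omega

lemma qH_walk_up (k : ℕ) : ∀ C A : Submodule K (Fin n → K), C ≤ A →
    finrank K ↥A = finrank K ↥C + k →
    ∃ w : (qHammingGraph K n).Walk C A, w.length = k := by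
  induction k with
  | zero =>
    intro C A hle hr
    have : C = A := Submodule.eq_of_le_of_finrank_le hle (by omega)
    subst this
    exact ⟨.nil, rfl⟩
  | succ k ih =>
    intro C A hle hr
    have hlt : C < A := lt_of_le_of_ne hle (by rintro rfl; omega)
    obtain ⟨C', h1, h2, h3⟩ := qH_exists_step C A hlt
    obtain ⟨w, hw⟩ := ih C' A h2 (by omega)
    exact ⟨.cons (show (qHammingGraph K n).Adj C C' from Or.inl ⟨h1, h3⟩) w, by simp [hw]⟩

lemma qH_inf_step (W Z B : Submodule K (Fin n → K)) (h : W ≤ Z)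
    (hr : finrank K ↥Z = finrank K ↥W + 1) :
    finrank K ↥(Z ⊓ B) ≤ finrank K ↥(W ⊓ B) + 1 := by
  have key := Submodule.finrank_sup_add_finrank_inf_eq W (Z ⊓ B)
  have h1 : W ⊓ (Z ⊓ B) = W ⊓ B := by rw [← inf_assoc, inf_eq_left.2 h]
  have h3 : finrank K ↥(W ⊔ Z ⊓ B) ≤ finrank K ↥Z :=
    Submodule.finrank_mono (sup_le h inf_le_left)
  rw [h1] at key
  omega

lemma qH_walk_ge :
    ∀ {X B : Submodule K (Fin n → K)} (w : (qHammingGraph K n).Walk X B),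
    (finrank K ↥X + finrank K ↥B : ℤ) - 2 * finrank K ↥(X ⊓ B) ≤ w.length := by
  intro X B w
  induction w with
  | nil => rw [inf_idem]; push_cast; omega
  | @cons X Y B h w ih =>
    rcases id h with ⟨hle, hr⟩ | ⟨hle, hr⟩
    · have h1 := qH_inf_step X Y B hle hr
      have h2 : finrank K ↥(X ⊓ B) ≤ finrank K ↥(Y ⊓ B) :=
        Submodule.finrank_mono (inf_le_inf_right B hle)
      simp only [SimpleGraph.Walk.length_cons]
      push_cast
      omega
    · have h1 := qH_inf_step Y X B hle hr
      have h2 : finrank K ↥(Y ⊓ B) ≤ finrank K ↥(X ⊓ B) :=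
        Submodule.finrank_mono (inf_le_inf_right B hle)
      simp only [SimpleGraph.Walk.length_cons]
      push_cast
      omega

end aux

/-- In the `q`-Hamming graph, the graph distance between subspaces `A` and `B`
equals `Δ(A,B) = dim A + dim B - 2 dim(A ∩ B)`. -/
theorem qHamming_dist_eq {K : Type*} [Field K] [Fintype K] (q n : ℕ)
    (hq : Fintype.card K = q) (hpp : IsPrimePow q)
    (A B : Submodule K (Fin n → K)) :
    (qHammingGraph K n).dist A B =
      finrank K ↥A + finrank K ↥B - 2 * finrank K ↥(A ⊓ B) := by
  have hIA : finrank K ↥(A ⊓ B) ≤ finrank K ↥A :=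
    Submodule.finrank_mono inf_le_left
  have hIB : finrank K ↥(A ⊓ B) ≤ finrank K ↥B :=
    Submodule.finrank_mono inf_le_right
  obtain ⟨w1, hw1⟩ := qH_walk_up (finrank K ↥A - finrank K ↥(A ⊓ B)) (A ⊓ B) A
    inf_le_left (by omega)
  obtain ⟨w2, hw2⟩ := qH_walk_up (finrank K ↥B - finrank K ↥(A ⊓ B)) (A ⊓ B) B
    inf_le_right (by omega)
  have hupper : (qHammingGraph K n).dist A B ≤
      finrank K ↥A + finrank K ↥B - 2 * finrank K ↥(A ⊓ B) := by
    have := SimpleGraph.dist_le (w1.reverse.append w2)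
    simp only [SimpleGraph.Walk.length_append, SimpleGraph.Walk.length_reverse,
      hw1, hw2] at this
    omega
  have hreach : (qHammingGraph K n).Reachable A B := ⟨w1.reverse.append w2⟩
  obtain ⟨w, hw⟩ := hreach.exists_walk_length_eq_dist
  have hlow := qH_walk_ge w
  rw [hw] at hlow
  omega
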